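/- Let x₁,…,xₙ ∈ [0,T] with average μ = (1/n)·∑ᵢ xᵢ where μ ≤ 1 and T > 2. Let S be a uniformly random subset of [n] of size k. Then P[∑_{i∈S} xᵢ > (T/2)·k] ≤ (4(T−1)/T²)^{k/2}. -/

import Mathlib

open Finset

variable {n : ℕ}

lemma swap_sum (m : ℕ) (f : Finset (Fin n) → Fin n → ℝ) :
    ∑ S ∈ powersetCard m (univ : Finset (Fin n)), ∑ i ∈ Sᶜ, f (insert i S) i
      = ∑ T ∈ powersetCard (m+1) (univ : Finset (Fin n)), ∑ i ∈ T, f T i := by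
  rw [Finset.sum_sigma', Finset.sum_sigma']
  refine Finset.sum_nbij' (fun p => ⟨insert p.2 p.1, p.2⟩)
    (fun q => ⟨q.1.erase q.2, q.2⟩) ?_ ?_ ?_ ?_ ?_
  · rintro ⟨S, i⟩ hp
    simp only [Finset.mem_sigma, Finset.mem_powersetCard_univ, Finset.mem_compl] at hp ⊢
    exact ⟨by rw [Finset.card_insert_of_notMem hp.2, hp.1], Finset.mem_insert_self _ _⟩
  · rintro ⟨T, i⟩ hq
    simp only [Finset.mem_sigma, Finset.mem_powersetCard_univ, Finset.mem_compl] at hq ⊢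
    exact ⟨by rw [Finset.card_erase_of_mem hq.2, hq.1]; rfl, Finset.notMem_erase _ _⟩
  · rintro ⟨S, i⟩ hp
    simp only [Finset.mem_sigma, Finset.mem_powersetCard_univ, Finset.mem_compl] at hp
    simp [Finset.erase_insert hp.2]
  · rintro ⟨T, i⟩ hq
    simp only [Finset.mem_sigma, Finset.mem_powersetCard_univ, Finset.mem_compl] at hq
    simp [Finset.insert_erase hq.2]
  · rintro ⟨S, i⟩ _; rfl

noncomputable def esum (a : Fin n → ℝ) (k : ℕ) : ℝ :=
  ∑ S ∈ powersetCard k (univ : Finset (Fin n)), ∏ i ∈ S, a i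

lemma esum_nonneg {a : Fin n → ℝ} (ha : ∀ i, 0 ≤ a i) (k : ℕ) : 0 ≤ esum a k :=
  Finset.sum_nonneg fun S _ => Finset.prod_nonneg fun i _ => ha i

lemma count1 (a : Fin n → ℝ) (m : ℕ) :
    ∑ S ∈ powersetCard m (univ : Finset (Fin n)), ∑ i ∈ Sᶜ, ∏ j ∈ insert i S, a j
      = ((m:ℝ)+1) * esum a (m+1) := by
  rw [swap_sum m (fun T _ => ∏ j ∈ T, a j), esum, Finset.mul_sum]
  refine Finset.sum_congr rfl fun T hT => ?_
  rw [Finset.sum_const, (Finset.mem_powersetCard_univ.mp hT)]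
  push_cast [nsmul_eq_mul]
  ring

lemma identity1 (a : Fin n → ℝ) (k : ℕ) :
    (∑ i, a i) * esum a (k+1)
      = (∑ B ∈ powersetCard k (univ : Finset (Fin n)),
            (∑ i ∈ Bᶜ, (a i)^2) * ∏ j ∈ B, a j)
        + ((k:ℝ)+2) * esum a (k+2) := by
  have expand : (∑ i, a i) * esum a (k+1)
      = ∑ S ∈ powersetCard (k+1) (univ : Finset (Fin n)),
          ((∑ i ∈ S, a i * ∏ j ∈ S, a j) + ∑ i ∈ Sᶜ, a i * ∏ j ∈ S, a j) := by
    rw [esum, Finset.mul_sum]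
    refine Finset.sum_congr rfl fun S _ => ?_
    rw [← Finset.sum_add_sum_compl S a, add_mul, Finset.sum_mul, Finset.sum_mul]
  have hA : ∑ S ∈ powersetCard (k+1) (univ : Finset (Fin n)),
        ∑ i ∈ S, a i * ∏ j ∈ S, a j
      = ∑ B ∈ powersetCard k (univ : Finset (Fin n)),
            (∑ i ∈ Bᶜ, (a i)^2) * ∏ j ∈ B, a j := by
    rw [← swap_sum k (fun T i => a i * ∏ j ∈ T, a j)]
    refine Finset.sum_congr rfl fun B _ => ?_
    rw [Finset.sum_mul]
    refine Finset.sum_congr rfl fun i hi => ?_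
    rw [Finset.prod_insert (Finset.mem_compl.mp hi)]
    ring
  have hB : ∑ S ∈ powersetCard (k+1) (univ : Finset (Fin n)),
        ∑ i ∈ Sᶜ, a i * ∏ j ∈ S, a j = ((k:ℝ)+2) * esum a (k+2) := by
    have h2 : ∑ S ∈ powersetCard (k+1) (univ : Finset (Fin n)),
          ∑ i ∈ Sᶜ, a i * ∏ j ∈ S, a j
        = ∑ S ∈ powersetCard (k+1) (univ : Finset (Fin n)),
          ∑ i ∈ Sᶜ, ∏ j ∈ insert i S, a j :=
      Finset.sum_congr rfl fun S _ => Finset.sum_congr rfl fun i hi => by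
        rw [Finset.prod_insert (Finset.mem_compl.mp hi)]
    rw [h2, count1 a (k+1), show k+1+1 = k+2 from rfl]
    push_cast
    ring
  rw [expand, Finset.sum_add_distrib, hA, hB]

lemma identity2 (a : Fin n → ℝ) (k : ℕ) :
    ∑ B ∈ powersetCard k (univ : Finset (Fin n)),
        (∑ i ∈ Bᶜ, ∑ j ∈ Bᶜ.erase i, a i * a j) * ∏ j ∈ B, a j
      = ((k:ℝ)+1) * (((k:ℝ)+2) * esum a (k+2)) := by
  have h1 : ∀ B ∈ powersetCard k (univ : Finset (Fin n)),
      (∑ i ∈ Bᶜ, ∑ j ∈ Bᶜ.erase i, a i * a j) * ∏ j ∈ B, a j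
        = ∑ i ∈ Bᶜ, (∑ j ∈ (insert i B)ᶜ, a j * ∏ l ∈ insert i B, a l) := by
    intro B _
    rw [Finset.sum_mul]
    refine Finset.sum_congr rfl fun i hi => ?_
    rw [Finset.compl_insert, Finset.sum_mul,
      Finset.prod_insert (Finset.mem_compl.mp hi)]
    refine Finset.sum_congr rfl fun j _ => by ring
  rw [Finset.sum_congr rfl h1,
    swap_sum k (fun T _ => ∑ j ∈ Tᶜ, a j * ∏ l ∈ T, a l)]
  have h2 : ∀ C ∈ powersetCard (k+1) (univ : Finset (Fin n)),
      (∑ _i ∈ C, ∑ j ∈ Cᶜ, a j * ∏ l ∈ C, a l)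
        = ((k:ℝ)+1) * ∑ j ∈ Cᶜ, ∏ l ∈ insert j C, a l := by
    intro C hC
    rw [Finset.sum_const, (Finset.mem_powersetCard_univ.mp hC), nsmul_eq_mul]
    push_cast
    rw [Finset.mul_sum, Finset.mul_sum]
    refine Finset.sum_congr rfl fun j hj => ?_
    rw [Finset.prod_insert (Finset.mem_compl.mp hj)]
  rw [Finset.sum_congr rfl h2, ← Finset.mul_sum, count1 a (k+1),
    show k+1+1 = k+2 from rfl]
  push_cast
  ring

lemma pair_expand (a : Fin n → ℝ) (U : Finset (Fin n)) :
    ∑ i ∈ U, ∑ j ∈ U.erase i, a i * a j = (∑ i ∈ U, a i)^2 - ∑ i ∈ U, (a i)^2 := by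
  have h : (∑ i ∈ U, a i)^2 = ∑ i ∈ U, ((a i)^2 + ∑ j ∈ U.erase i, a i * a j) := by
    rw [sq, Finset.sum_mul]
    refine Finset.sum_congr rfl fun i hi => ?_
    rw [← Finset.add_sum_erase _ a hi, mul_add, sq, Finset.mul_sum]
  rw [h, Finset.sum_add_distrib]
  ring

lemma step_ineq (a : Fin n → ℝ) (ha : ∀ i, 0 ≤ a i) (k : ℕ) (hk : k + 2 ≤ n) :
    (n:ℝ) * (n.choose (k+1) : ℝ) * esum a (k+2)
      ≤ (n.choose (k+2) : ℝ) * ((∑ i, a i) * esum a (k+1)) := by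
  set E2 := esum a (k+2) with hE2def
  set R := ∑ B ∈ powersetCard k (univ : Finset (Fin n)),
      (∑ i ∈ Bᶜ, (a i)^2) * ∏ j ∈ B, a j with hRdef
  set c1 := (n.choose (k+1) : ℝ) with hc1def
  set c2 := (n.choose (k+2) : ℝ) with hc2def
  set d := (n:ℝ) - (k:ℝ) - 1 with hddef
  have hdpos : 0 < d := by
    have : (k:ℝ) + 2 ≤ (n:ℝ) := by exact_mod_cast hk
    rw [hddef]; linarith
  have hE2 : (0:ℝ) ≤ E2 := esum_nonneg ha (k+2)
  have hc2 : (0:ℝ) ≤ c2 := by positivity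
  -- Q ≤ d * R  via per-B Cauchy-Schwarz
  have hQR : ((k:ℝ)+1) * (((k:ℝ)+2) * E2) ≤ d * R := by
    rw [← identity2 a k, hRdef, Finset.mul_sum]
    refine Finset.sum_le_sum fun B hB => ?_
    have hcard : (Bᶜ.card : ℝ) = (n:ℝ) - (k:ℝ) := by
      rw [Finset.card_compl, (Finset.mem_powersetCard_univ.mp hB), Fintype.card_fin]
      push_cast [Nat.cast_sub (by omega : k ≤ n)]
      ring
    have hcs : (∑ i ∈ Bᶜ, a i)^2 ≤ ((n:ℝ) - (k:ℝ)) * ∑ i ∈ Bᶜ, (a i)^2 := by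
      have := sq_sum_le_card_mul_sum_sq (s := Bᶜ) (f := a)
      rw [← hcard]; exact_mod_cast this
    have hpair : ∑ i ∈ Bᶜ, ∑ j ∈ Bᶜ.erase i, a i * a j ≤ d * ∑ i ∈ Bᶜ, (a i)^2 := by
      rw [pair_expand a Bᶜ, hddef]
      have hsq : (0:ℝ) ≤ ∑ i ∈ Bᶜ, (a i)^2 :=
        Finset.sum_nonneg fun i _ => sq_nonneg _
      nlinarith [hcs]
    have hprod : (0:ℝ) ≤ ∏ j ∈ B, a j := Finset.prod_nonneg fun j _ => ha j
    calc (∑ i ∈ Bᶜ, ∑ j ∈ Bᶜ.erase i, a i * a j) * ∏ j ∈ B, a j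
        ≤ (d * ∑ i ∈ Bᶜ, (a i)^2) * ∏ j ∈ B, a j :=
          mul_le_mul_of_nonneg_right hpair hprod
      _ = d * ((∑ i ∈ Bᶜ, (a i)^2) * ∏ j ∈ B, a j) := by ring
  have h1 : (∑ i, a i) * esum a (k+1) = R + ((k:ℝ)+2) * E2 := identity1 a k
  have hchoose : c2 * ((k:ℝ)+2) = c1 * d := by
    have hnat : n.choose (k+2) * (k+2) = n.choose (k+1) * (n - (k+1)) :=
      Nat.choose_succ_right_eq n (k+1)
    have hcast : ((n.choose (k+2) * (k+2) : ℕ) : ℝ)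
        = ((n.choose (k+1) * (n - (k+1)) : ℕ) : ℝ) := by rw [hnat]
    push_cast [Nat.cast_sub (show k+1 ≤ n by omega)] at hcast
    rw [hc1def, hc2def, hddef]
    linear_combination hcast
  have key : d * ((n:ℝ) * c1 * E2) ≤ d * (c2 * ((∑ i, a i) * esum a (k+1))) := by
    rw [h1]
    have e1 : d * ((n:ℝ) * c1 * E2)
        = c2 * (((k:ℝ)+1) * (((k:ℝ)+2) * E2)) + d * (c2 * (((k:ℝ)+2) * E2)) := by
      linear_combination (-(((k:ℝ)+1) * E2 + d * E2)) * hchoose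
    have e2 : d * (c2 * (R + ((k:ℝ)+2) * E2))
        = c2 * (d * R) + d * (c2 * (((k:ℝ)+2) * E2)) := by ring
    rw [e1, e2]
    exact add_le_add_left (mul_le_mul_of_nonneg_left hQR hc2) _
  exact le_of_mul_le_mul_left key hdpos

lemma esum_le (a : Fin n → ℝ) (ha : ∀ i, 0 ≤ a i) :
    ∀ k, k ≤ n → (n:ℝ)^k * esum a k ≤ (n.choose k : ℝ) * (∑ i, a i)^k := by
  intro k
  induction k using Nat.strong_induction_on with
  | _ k ih =>
    intro hkn
    match k, ih, hkn with
    | 0, _, _ => simp [esum]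
    | 1, _, h1 =>
      have he : esum a 1 = ∑ i, a i := by
        rw [esum, Finset.powersetCard_one, Finset.sum_map]
        simp
      rw [he, Nat.choose_one_right]
      simp
    | (m+2), ih, hm =>
      have ih1 := ih (m+1) (by omega) (by omega)
      have hstep := step_ineq a ha m hm
      set A := ∑ i, a i with hAdef
      have hA : (0:ℝ) ≤ A := Finset.sum_nonneg fun i _ => ha i
      have hc2 : (0:ℝ) ≤ (n.choose (m+2) : ℝ) := by positivity
      have hc1pos : (0:ℝ) < (n.choose (m+1) : ℝ) := by
        exact_mod_cast Nat.choose_pos (by omega : m+1 ≤ n)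
      have t1 : (n:ℝ)^(m+1) * ((n:ℝ) * (n.choose (m+1) : ℝ) * esum a (m+2))
          ≤ (n:ℝ)^(m+1) * ((n.choose (m+2) : ℝ) * (A * esum a (m+1))) :=
        mul_le_mul_of_nonneg_left hstep (by positivity)
      have t2 : (n.choose (m+2) : ℝ) * A * ((n:ℝ)^(m+1) * esum a (m+1))
          ≤ (n.choose (m+2) : ℝ) * A * ((n.choose (m+1) : ℝ) * A^(m+1)) :=
        mul_le_mul_of_nonneg_left ih1 (by positivity)
      have key : (n.choose (m+1) : ℝ) * ((n:ℝ)^(m+2) * esum a (m+2))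
          ≤ (n.choose (m+1) : ℝ) * ((n.choose (m+2) : ℝ) * A^(m+2)) := by
        calc (n.choose (m+1) : ℝ) * ((n:ℝ)^(m+2) * esum a (m+2))
            = (n:ℝ)^(m+1) * ((n:ℝ) * (n.choose (m+1) : ℝ) * esum a (m+2)) := by ring
          _ ≤ (n:ℝ)^(m+1) * ((n.choose (m+2) : ℝ) * (A * esum a (m+1))) := t1
          _ = (n.choose (m+2) : ℝ) * A * ((n:ℝ)^(m+1) * esum a (m+1)) := by ring
          _ ≤ (n.choose (m+2) : ℝ) * A * ((n.choose (m+1) : ℝ) * A^(m+1)) := t2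
          _ = (n.choose (m+1) : ℝ) * ((n.choose (m+2) : ℝ) * A^(m+2)) := by ring
      exact le_of_mul_le_mul_left key hc1pos

open scoped Classical

theorem hoeffding_tail_bound_without_replacement {n : ℕ} (hn : 0 < n)
    (k : ℕ) (hk : k ≤ n) (T : ℝ) (hT : 2 < T)
    (x : Fin n → ℝ) (hx : ∀ i, x i ∈ Set.Icc (0:ℝ) T)
    (hμ : (1/(n:ℝ)) * ∑ i, x i ≤ 1) :
    (((Finset.powersetCard k (Finset.univ : Finset (Fin n))).filter
        (fun S : Finset (Fin n) => (T/2) * k < ∑ i ∈ S, x i)).card : ℝ)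
      / ((Finset.powersetCard k (Finset.univ : Finset (Fin n))).card : ℝ)
      ≤ (4*(T-1)/T^2) ^ ((k:ℝ)/2) := by
  have hT0 : (0:ℝ) < T := by linarith
  have hT1 : (1:ℝ) ≤ T - 1 := by linarith
  have hT1' : (0:ℝ) < T - 1 := by linarith
  have hCpos : (0:ℝ) < (n.choose k : ℝ) := by exact_mod_cast Nat.choose_pos hk
  have hcard : (((Finset.powersetCard k (Finset.univ : Finset (Fin n))).card) : ℝ)
      = (n.choose k : ℝ) := by
    rw [Finset.card_powersetCard, Finset.card_univ, Fintype.card_fin]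
  set a : Fin n → ℝ := fun i => 1 + (x i / T) * (T - 2) with hadef
  have ha : ∀ i, 0 ≤ a i := by
    intro i
    have h0 : 0 ≤ x i / T := div_nonneg (hx i).1 hT0.le
    have h2 : (0:ℝ) ≤ T - 2 := by linarith
    have := mul_nonneg h0 h2
    simp only [hadef]
    linarith
  have hbad : ∀ S ∈ (Finset.powersetCard k (Finset.univ : Finset (Fin n))).filter
      (fun S : Finset (Fin n) => (T/2) * k < ∑ i ∈ S, x i),
      (T-1) ^ ((k:ℝ)/2) ≤ ∏ i ∈ S, a i := by
    intro S hS
    rw [Finset.mem_filter] at hS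
    obtain ⟨_, hSsum⟩ := hS
    have hexp : (k:ℝ)/2 ≤ ∑ i ∈ S, x i / T := by
      rw [← Finset.sum_div, le_div_iff₀ hT0]
      nlinarith [hSsum]
    have hmono : (T-1) ^ ((k:ℝ)/2) ≤ (T-1) ^ (∑ i ∈ S, x i / T) :=
      Real.rpow_le_rpow_of_exponent_le hT1 hexp
    have hfact : (T-1) ^ (∑ i ∈ S, x i / T) = ∏ i ∈ S, (T-1) ^ (x i / T) := by
      rw [Real.rpow_def_of_pos hT1', Finset.mul_sum, Real.exp_sum]
      exact Finset.prod_congr rfl fun i _ => (Real.rpow_def_of_pos hT1' _).symm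
    have hprd : ∏ i ∈ S, (T-1) ^ (x i / T) ≤ ∏ i ∈ S, a i := by
      refine Finset.prod_le_prod (fun i _ => Real.rpow_nonneg hT1'.le _) (fun i _ => ?_)
      have hp0 : 0 ≤ x i / T := div_nonneg (hx i).1 hT0.le
      have hp1 : x i / T ≤ 1 := by rw [div_le_one hT0]; exact (hx i).2
      have hb := rpow_one_add_le_one_add_mul_self
        (s := T - 2) (by linarith) hp0 hp1
      calc (T-1) ^ (x i / T) = (1 + (T-2)) ^ (x i / T) := by
            rw [show (1:ℝ) + (T-2) = T - 1 from by ring]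
        _ ≤ 1 + (x i / T) * (T-2) := hb
        _ = a i := rfl
    calc (T-1) ^ ((k:ℝ)/2) ≤ (T-1) ^ (∑ i ∈ S, x i / T) := hmono
      _ = ∏ i ∈ S, (T-1) ^ (x i / T) := hfact
      _ ≤ ∏ i ∈ S, a i := hprd
  have hcount : ((((Finset.powersetCard k (Finset.univ : Finset (Fin n))).filter
        (fun S : Finset (Fin n) => (T/2) * k < ∑ i ∈ S, x i)).card : ℝ))
        * (T-1) ^ ((k:ℝ)/2) ≤ esum a k := by
    have h1 := Finset.card_nsmul_le_sum _ _ _ hbad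
    rw [nsmul_eq_mul] at h1
    refine h1.trans ?_
    exact Finset.sum_le_sum_of_subset_of_nonneg (Finset.filter_subset _ _)
      (fun S _ _ => Finset.prod_nonneg fun i _ => ha i)
  have hx_sum : ∑ i, x i ≤ (n:ℝ) := by
    have hn' : (0:ℝ) < n := by exact_mod_cast hn
    rw [div_mul_eq_mul_div, div_le_one hn', one_mul] at hμ
    exact hμ
  have hAsum : ∑ i, a i ≤ (n:ℝ) * (2*(T-1)/T) := by
    have heq : ∑ i, a i = (n:ℝ) + (∑ i, x i) * ((T-2)/T) := by
      simp only [hadef]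
      rw [Finset.sum_add_distrib, Finset.sum_const, Finset.card_univ, Fintype.card_fin,
        nsmul_eq_mul, mul_one]
      congr 1
      rw [← Finset.sum_mul, ← Finset.sum_div]
      ring
    rw [heq]
    have h2 : (0:ℝ) ≤ (T-2)/T := div_nonneg (by linarith) hT0.le
    have h3 : (∑ i, x i) * ((T-2)/T) ≤ (n:ℝ) * ((T-2)/T) :=
      mul_le_mul_of_nonneg_right hx_sum h2
    have h4 : (n:ℝ) + (n:ℝ) * ((T-2)/T) = (n:ℝ) * (2*(T-1)/T) := by
      field_simp
      ring
    linarith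
  have hb0 : (0:ℝ) ≤ 2*(T-1)/T := by positivity
  have hesum : esum a k ≤ (n.choose k : ℝ) * (2*(T-1)/T)^k := by
    have h3 := esum_le a ha k hk
    have h4 : (∑ i, a i)^k ≤ ((n:ℝ) * (2*(T-1)/T))^k :=
      pow_le_pow_left₀ (Finset.sum_nonneg fun i _ => ha i) hAsum k
    have hnpow : (0:ℝ) < (n:ℝ)^k := by positivity
    have h5 : (n:ℝ)^k * esum a k ≤ (n:ℝ)^k * ((n.choose k:ℝ) * (2*(T-1)/T)^k) := by
      calc (n:ℝ)^k * esum a k ≤ (n.choose k:ℝ) * (∑ i, a i)^k := h3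
        _ ≤ (n.choose k:ℝ) * ((n:ℝ) * (2*(T-1)/T))^k :=
          mul_le_mul_of_nonneg_left h4 (by positivity)
        _ = (n:ℝ)^k * ((n.choose k:ℝ) * (2*(T-1)/T)^k) := by rw [mul_pow]; ring
    exact le_of_mul_le_mul_left h5 hnpow
  have hL : (0:ℝ) < (T-1) ^ ((k:ℝ)/2) := Real.rpow_pos_of_pos hT1' _
  have heq2 : (4*(T-1)/T^2) ^ ((k:ℝ)/2) = (2*(T-1)/T)^k / (T-1) ^ ((k:ℝ)/2) := by
    have h6 : 4*(T-1)/T^2 = (2*(T-1)/T)^2 / (T-1) := by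
      field_simp
      ring
    rw [h6, Real.div_rpow (by positivity) hT1'.le]
    congr 1
    rw [← Real.rpow_natCast (2*(T-1)/T) 2, ← Real.rpow_mul hb0,
      ← Real.rpow_natCast (2*(T-1)/T) k]
    congr 1
    push_cast
    ring
  rw [hcard, div_le_iff₀ hCpos, heq2]
  have h2 : ((((Finset.powersetCard k (Finset.univ : Finset (Fin n))).filter
        (fun S : Finset (Fin n) => (T/2) * k < ∑ i ∈ S, x i)).card : ℝ))
      ≤ (n.choose k : ℝ) * (2*(T-1)/T)^k / (T-1) ^ ((k:ℝ)/2) :=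
    (le_div_iff₀ hL).mpr (hcount.trans hesum)
  exact h2.trans_eq (by ring)
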